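/- Let Γ be a pre-automatic structure over a finite alphabet A that is an automatic cross-section, with interpretation σ : A⁺ → S. Then for any word w ∈ A⁺, the element σ(w) is right cancellable in S (i.e., xσ(w) = yσ(w) implies x = y for all x, y ∈ S) if and only if L_w ∘ L_w⁻¹ is the diagonal relation { (u, u) : u ∈ L } on L. -/
import Mathlib


universe u v

/-- A pre-automatic structure over an alphabet `A`: a language `L` of nonempty words
(elements of the free semigroup `A⁺`), a relation `L₌ ⊆ L × L`, and for each letter
`a ∈ A` a relation `Lₐ ⊆ L × L`. -/
structure PreAutomaticStructure (A : Type u) where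
  L : Set (FreeSemigroup A)
  Leq : Set (FreeSemigroup A × FreeSemigroup A)
  Lletter : A → Set (FreeSemigroup A × FreeSemigroup A)
  Leq_sub : Leq ⊆ L ×ˢ L
  Lletter_sub : ∀ a, Lletter a ⊆ L ×ˢ L

/-- An interpretation of a pre-automatic structure with respect to a semigroup `S`:
a semigroup homomorphism `σ : A⁺ → S` such that (i) `σ(L) = S`, (ii) `L₌` captures
equality of representatives, (iii) `Lₐ` captures right multiplication by `a`. -/
structure IsInterpretation {A : Type u} {S : Type v} [Semigroup S]
    (Γ : PreAutomaticStructure A) (σ : FreeSemigroup A →ₙ* S) : Prop where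
  surj : ⇑σ '' Γ.L = Set.univ
  eq_iff : ∀ u ∈ Γ.L, ∀ v ∈ Γ.L, ((u, v) ∈ Γ.Leq ↔ σ u = σ v)
  step_iff : ∀ (a : A), ∀ u ∈ Γ.L, ∀ v ∈ Γ.L,
    ((u, v) ∈ Γ.Lletter a ↔ σ (u * FreeSemigroup.of a) = σ v)

/-- `σ` is consistent with the assignment of generators `ι : A → L`. -/
def ConsistentWith {A : Type u} {S : Type v} [Semigroup S] (Γ : PreAutomaticStructure A)
    (σ : FreeSemigroup A →ₙ* S) (ι : A → FreeSemigroup A) : Prop :=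
  (∀ a, ι a ∈ Γ.L) ∧ ∀ a, σ (ι a) = σ (FreeSemigroup.of a)

/-- `ι : A → L` is an assignment of generators: some interpretation is consistent with it. -/
def IsAssignment {A : Type u} (Γ : PreAutomaticStructure A)
    (ι : A → FreeSemigroup A) : Prop :=
  ∃ (T : Type v) (inst : Semigroup T)
    (τ : @MulHom (FreeSemigroup A) T _ inst.toMul),
    @IsInterpretation A T inst Γ τ ∧ @ConsistentWith A T inst Γ τ ι

/-- Composition of relations: `(u, v) ∈ R ∘ R'` iff `∃ x, (u, x) ∈ R ∧ (x, v) ∈ R'`. -/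
def relComp {W : Type*} (R R' : Set (W × W)) : Set (W × W) :=
  {p | ∃ x, (p.1, x) ∈ R ∧ (x, p.2) ∈ R'}

/-- The inverse of a relation. -/
def relInv {W : Type*} (R : Set (W × W)) : Set (W × W) := {p | (p.2, p.1) ∈ R}

/-- `L_w` for a word `w` given as a list of letters: `L_ε = L₌` and
`L_{a₁⋯aₙ} = L_{a₁} ∘ ⋯ ∘ L_{aₙ}`. -/
def PreAutomaticStructure.LwordList {A : Type u} (Γ : PreAutomaticStructure A) :
    List A → Set (FreeSemigroup A × FreeSemigroup A)
  | [] => Γ.Leq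
  | [a] => Γ.Lletter a
  | a :: b :: rest => relComp (Γ.Lletter a) (Γ.LwordList (b :: rest))

/-- `L_w` for a nonempty word `w ∈ A⁺`. -/
def PreAutomaticStructure.Lword {A : Type u} (Γ : PreAutomaticStructure A)
    (w : FreeSemigroup A) : Set (FreeSemigroup A × FreeSemigroup A) :=
  Γ.LwordList (w.head :: w.tail)


private def elemOf {A : Type u} (a : A) : List A → FreeSemigroup A
  | [] => FreeSemigroup.of a
  | b :: rest => FreeSemigroup.of a * elemOf b rest

private lemma elemOf_eq {A : Type u} (a : A) (l : List A) :
    elemOf a l = ⟨a, l⟩ := by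
  induction l generalizing a with
  | nil => rfl
  | cons b rest ih => simp [elemOf, ih b]; rfl

private lemma mem_LwordList {A : Type u} (Γ : PreAutomaticStructure A) (a : A) (l : List A)
    (u v : FreeSemigroup A) (h : (u, v) ∈ Γ.LwordList (a :: l)) : u ∈ Γ.L ∧ v ∈ Γ.L := by
  induction l generalizing a u with
  | nil => exact Γ.Lletter_sub a h
  | cons b rest ih =>
    obtain ⟨x, h1, h2⟩ := h
    exact ⟨(Γ.Lletter_sub a h1).1, (ih b x h2).2⟩

private lemma LwordList_iff {A : Type u} {S : Type v} [Semigroup S]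
    (Γ : PreAutomaticStructure A) (σ : FreeSemigroup A →ₙ* S)
    (hσ : IsInterpretation Γ σ) (a : A) (l : List A)
    (u v : FreeSemigroup A) (hu : u ∈ Γ.L) (hv : v ∈ Γ.L) :
    (u, v) ∈ Γ.LwordList (a :: l) ↔ σ (u * elemOf a l) = σ v := by
  induction l generalizing a u with
  | nil => exact hσ.step_iff a u hu v hv
  | cons b rest ih =>
    constructor
    · rintro ⟨x, h1, h2⟩
      have hx := (Γ.Lletter_sub a h1).2
      have e1 := (hσ.step_iff a u hu x hx).mp h1
      have e2 := (ih b x hx).mp h2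
      calc σ (u * elemOf a (b :: rest)) = σ (u * FreeSemigroup.of a) * σ (elemOf b rest) := by
            rw [elemOf, ← mul_assoc, map_mul]
        _ = σ (x * elemOf b rest) := by rw [e1, ← map_mul]
        _ = σ v := e2
    · intro h
      have : σ (u * FreeSemigroup.of a) ∈ Set.univ := Set.mem_univ _
      rw [← hσ.surj] at this
      obtain ⟨x, hx, hxe⟩ := this
      refine ⟨x, (hσ.step_iff a u hu x hx).mpr hxe.symm, (ih b x hx).mpr ?_⟩
      calc σ (x * elemOf b rest) = σ (u * FreeSemigroup.of a) * σ (elemOf b rest) := by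
            rw [map_mul, hxe, map_mul]
        _ = σ v := by rw [← map_mul, mul_assoc]; exact h

private lemma Lword_iff {A : Type u} {S : Type v} [Semigroup S]
    (Γ : PreAutomaticStructure A) (σ : FreeSemigroup A →ₙ* S)
    (hσ : IsInterpretation Γ σ) (w : FreeSemigroup A)
    (u v : FreeSemigroup A) (hu : u ∈ Γ.L) (hv : v ∈ Γ.L) :
    (u, v) ∈ Γ.Lword w ↔ σ (u * w) = σ v := by
  have : elemOf w.head w.tail = w := elemOf_eq w.head w.tail
  rw [PreAutomaticStructure.Lword, LwordList_iff Γ σ hσ _ _ u v hu hv, this]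

private lemma mem_Lword {A : Type u} (Γ : PreAutomaticStructure A) (w : FreeSemigroup A)
    (u v : FreeSemigroup A) (h : (u, v) ∈ Γ.Lword w) : u ∈ Γ.L ∧ v ∈ Γ.L :=
  mem_LwordList Γ _ _ u v h

/-- For an automatic cross-section: `σ(w)` is right cancellable iff `L_w ∘ L_w⁻¹` is the
diagonal relation on `L`. -/
theorem stmt_6 {A : Type*} [Finite A] {S : Type*} [Semigroup S]
    (Γ : PreAutomaticStructure A) (σ : FreeSemigroup A →ₙ* S)
    (hσ : IsInterpretation Γ σ) (hcs : Set.BijOn (⇑σ) Γ.L Set.univ)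
    (w : FreeSemigroup A) :
    (∀ x y : S, x * σ w = y * σ w → x = y) ↔
      relComp (Γ.Lword w) (relInv (Γ.Lword w)) =
        {p : FreeSemigroup A × FreeSemigroup A | p.1 ∈ Γ.L ∧ p.2 = p.1} := by
  constructor
  · intro hrc
    ext ⟨u, v⟩
    constructor
    · rintro ⟨x, h1, h2⟩
      have h2' : (v, x) ∈ Γ.Lword w := h2
      have hu := (mem_Lword Γ w u x h1).1
      have hx := (mem_Lword Γ w u x h1).2
      have hv := (mem_Lword Γ w v x h2').1
      have e1 := (Lword_iff Γ σ hσ w u x hu hx).mp h1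
      have e2 := (Lword_iff Γ σ hσ w v x hv hx).mp h2'
      have : σ u * σ w = σ v * σ w := by
        rw [← map_mul, ← map_mul, e1, e2]
      have := hrc _ _ this
      exact ⟨hu, (hcs.injOn hv hu this.symm)⟩
    · rintro ⟨hu, he⟩
      simp only at he hu
      rw [show v = u from he]
      have : σ (u * w) ∈ Set.univ := Set.mem_univ _
      rw [← hσ.surj] at this
      obtain ⟨x, hx, hxe⟩ := this
      have h1 : (u, x) ∈ Γ.Lword w := (Lword_iff Γ σ hσ w u x hu hx).mpr hxe.symm
      exact ⟨x, h1, h1⟩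
  · intro heq x y hxy
    obtain ⟨u, hu, hue⟩ : ∃ u ∈ Γ.L, σ u = x := by
      have : x ∈ Set.univ := Set.mem_univ _
      rw [← hσ.surj] at this; exact this.imp fun u h => ⟨h.1, h.2⟩
    obtain ⟨v, hv, hve⟩ : ∃ v ∈ Γ.L, σ v = y := by
      have : y ∈ Set.univ := Set.mem_univ _
      rw [← hσ.surj] at this; exact this.imp fun v h => ⟨h.1, h.2⟩
    obtain ⟨z, hz, hze⟩ : ∃ z ∈ Γ.L, σ z = σ (u * w) := by
      have : σ (u * w) ∈ Set.univ := Set.mem_univ _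
      rw [← hσ.surj] at this; exact this.imp fun z h => ⟨h.1, h.2⟩
    have h1 : (u, z) ∈ Γ.Lword w := (Lword_iff Γ σ hσ w u z hu hz).mpr hze.symm
    have h2 : (v, z) ∈ Γ.Lword w := by
      refine (Lword_iff Γ σ hσ w v z hv hz).mpr ?_
      rw [map_mul, hve, ← hxy, ← hue, ← map_mul, hze]
    have : (u, v) ∈ relComp (Γ.Lword w) (relInv (Γ.Lword w)) := ⟨z, h1, h2⟩
    rw [heq] at this
    have hvu : v = u := this.2
    rw [← hue, ← hve, hvu]
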